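/- (Inhomogeneous super Yang-Mills, component form) Tensors j̃^{αβγ}, j̃^{αβ}, j̃^{α} over K satisfy the super PBW conditions — (i) j̃^{αβγ} + j̃^{βγα} = (g^{αβ}g^{γρ} − g^{βγ}g^{αρ})b_ρ for some b_ρ; (ii) j̃^{αβγ}b_γ + j̃^{αβ} + j̃^{βα} = 0; (iii) j̃^{αγ}b_γ + 2 j̃^{α} = 0; (iv) j̃^{ρ}b_ρ = 0 — if and only if j̃^{αβγ} = (g^{αγ}g^{βρ} − g^{βγ}g^{αρ})b_ρ, j̃^{αβ} = ω^{αβ} with ω antisymmetric (ω^{αβ} = −ω^{βα}), and j̃^{α} = −(1/2) ω^{αρ}b_ρ. -/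
import Mathlib


open Finset

private lemma aux_sum {K : Type*} [CommRing K] {n : ℕ} (u v b : Fin n → K) (x y : K) :
    ∑ ρ, (x * u ρ - y * v ρ) * b ρ = x * (∑ ρ, u ρ * b ρ) - y * (∑ ρ, v ρ * b ρ) := by
  rw [Finset.mul_sum, Finset.mul_sum, ← Finset.sum_sub_distrib]
  exact Finset.sum_congr rfl fun ρ _ => by ring

/-- Inhomogeneous super Yang-Mills, component form: the four super PBW
conditions hold (for some `b`) iff the current has the form of Theorem 4.2 of the paper. -/
theorem regular_currents_super_yang_mills {K : Type*} [Field K] (hchar : (2 : K) ≠ 0) {s : ℕ}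
    (g ginv : Fin (s + 1) → Fin (s + 1) → K)
    (hsym : ∀ α β, g α β = g β α)
    (hinv : ∀ α γ, ∑ β, g α β * ginv β γ = if α = γ then 1 else 0)
    (j3 : Fin (s + 1) → Fin (s + 1) → Fin (s + 1) → K)
    (j2 : Fin (s + 1) → Fin (s + 1) → K)
    (j1 : Fin (s + 1) → K) :
    (∃ b : Fin (s + 1) → K,
        (∀ α β γ, j3 α β γ + j3 β γ α = ∑ ρ, (g α β * g γ ρ - g β γ * g α ρ) * b ρ) ∧
        (∀ α β, (∑ γ, j3 α β γ * b γ) + j2 α β + j2 β α = 0) ∧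
        (∀ α, (∑ γ, j2 α γ * b γ) + 2 * j1 α = 0) ∧
        (∑ ρ, j1 ρ * b ρ = 0)) ↔
    (∃ (b : Fin (s + 1) → K) (ω : Fin (s + 1) → Fin (s + 1) → K),
        (∀ α β, ω α β = -ω β α) ∧
        (∀ α β γ, j3 α β γ = ∑ ρ, (g α γ * g β ρ - g β γ * g α ρ) * b ρ) ∧
        (∀ α β, j2 α β = ω α β) ∧
        (∀ α, j1 α = -(1/2) * ∑ ρ, ω α ρ * b ρ)) := by
  constructor
  · rintro ⟨b, h1, h2, h3, _h4⟩
    -- the contraction c α = ∑ ρ, g α ρ * b ρ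
    have h1' : ∀ α β γ, j3 α β γ + j3 β γ α =
        g α β * (∑ ρ, g γ ρ * b ρ) - g β γ * (∑ ρ, g α ρ * b ρ) := by
      intro α β γ
      rw [h1]
      exact aux_sum _ _ _ _ _
    -- the explicit formula for j3
    have hE : ∀ α β γ, j3 α β γ =
        g α γ * (∑ ρ, g β ρ * b ρ) - g β γ * (∑ ρ, g α ρ * b ρ) := by
      intro α β γ
      have e1 := h1' α β γ
      have e2 := h1' β γ α
      have e3 := h1' γ α β
      have h2' : (2 : K) * j3 α β γ =
          2 * (g α γ * (∑ ρ, g β ρ * b ρ) - g β γ * (∑ ρ, g α ρ * b ρ)) := by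
        linear_combination e1 - e2 + e3 + 2 * (∑ ρ, g β ρ * b ρ) * hsym γ α
      exact mul_left_cancel₀ hchar h2'
    have hE' : ∀ α β γ, j3 α β γ = ∑ ρ, (g α γ * g β ρ - g β γ * g α ρ) * b ρ := by
      intro α β γ
      rw [hE, ← aux_sum]
    -- contraction of j3 with b vanishes
    have hz : ∀ α β, ∑ γ, j3 α β γ * b γ = 0 := by
      intro α β
      have : ∑ γ, j3 α β γ * b γ =
          (∑ γ, g α γ * b γ) * (∑ ρ, g β ρ * b ρ)
            - (∑ γ, g β γ * b γ) * (∑ ρ, g α ρ * b ρ) := by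
        rw [Finset.sum_mul, Finset.sum_mul, ← Finset.sum_sub_distrib]
        refine Finset.sum_congr rfl fun γ _ => ?_
        rw [hE]; ring
      rw [this]; ring
    refine ⟨b, j2, ?_, hE', fun _ _ => rfl, ?_⟩
    · intro α β
      have := h2 α β
      rw [hz] at this
      linear_combination this
    · intro α
      have h12 : (2 : K) * (1/2) = 1 := by rw [mul_one_div]; exact div_self hchar
      linear_combination (1/2 : K) * h3 α - j1 α * h12
  · rintro ⟨b, ω, hanti, h3f, h2f, h1f⟩
    refine ⟨b, ?_, ?_, ?_, ?_⟩
    · intro α β γ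
      rw [h3f, h3f, ← Finset.sum_add_distrib]
      refine Finset.sum_congr rfl fun ρ _ => ?_
      linear_combination (g β ρ * b ρ) * (hsym α γ) + (g γ ρ * b ρ) * (hsym β α)
    · intro α β
      have hz : ∑ γ, j3 α β γ * b γ = 0 := by
        have : ∑ γ, j3 α β γ * b γ =
            (∑ γ, g α γ * b γ) * (∑ ρ, g β ρ * b ρ)
              - (∑ γ, g β γ * b γ) * (∑ ρ, g α ρ * b ρ) := by
          rw [Finset.sum_mul, Finset.sum_mul, ← Finset.sum_sub_distrib]
          refine Finset.sum_congr rfl fun γ _ => ?_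
          rw [h3f, aux_sum]; ring
        rw [this]; ring
      rw [hz, h2f, h2f, hanti α β]; ring
    · intro α
      have : ∑ γ, j2 α γ * b γ = ∑ ρ, ω α ρ * b ρ :=
        Finset.sum_congr rfl fun γ _ => by rw [h2f]
      have h12 : (2 : K) * (1/2) = 1 := by rw [mul_one_div]; exact div_self hchar
      rw [this, h1f]
      linear_combination (-(∑ ρ, ω α ρ * b ρ)) * h12
    · -- ∑ j1 ρ b ρ = 0 by antisymmetry of ω
      have hT : ∑ ρ, ∑ σ, ω ρ σ * b σ * b ρ = -∑ ρ, ∑ σ, ω ρ σ * b σ * b ρ := by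
        calc ∑ ρ, ∑ σ, ω ρ σ * b σ * b ρ
            = ∑ σ, ∑ ρ, ω ρ σ * b σ * b ρ := Finset.sum_comm
          _ = ∑ σ, ∑ ρ, -(ω σ ρ * b ρ * b σ) := by
              refine Finset.sum_congr rfl fun σ _ => Finset.sum_congr rfl fun ρ _ => ?_
              rw [hanti ρ σ]; ring
          _ = -∑ ρ, ∑ σ, ω ρ σ * b σ * b ρ := by
              rw [← Finset.sum_neg_distrib]
              exact Finset.sum_congr rfl fun σ _ => by rw [← Finset.sum_neg_distrib]
      have hT0 : ∑ ρ, ∑ σ, ω ρ σ * b σ * b ρ = 0 := by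
        have h2T : (2 : K) * (∑ ρ, ∑ σ, ω ρ σ * b σ * b ρ) = 0 := by
          linear_combination hT
        exact (mul_eq_zero.mp h2T).resolve_left hchar
      have : ∑ ρ, j1 ρ * b ρ = -(1/2) * ∑ ρ, ∑ σ, ω ρ σ * b σ * b ρ := by
        rw [Finset.mul_sum]
        refine Finset.sum_congr rfl fun ρ _ => ?_
        rw [h1f, mul_assoc, Finset.sum_mul]
      rw [this, hT0, mul_zero]
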